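/- Let (f_I)_I be a closed l-form with polynomial coefficients on ℝ^p with l ≥ 1 and deg f_I ≤ m for every I. Then there exists a family (g_K)_K of complex polynomial functions on ℝ^p, indexed by the strictly increasing (l−1)-tuples K from {1,…,p}, with deg g_K ≤ m+1 for every K, such that for every strictly increasing l-tuple I = (i_1 < … < i_l) one has f_I = Σ_{a=1}^{l} (−1)^{a−1} ∂_{i_a} g_{I∖i_a}, where I∖i_a denotes I with the entry i_a removed. (For l = 1 the family (g_K) consists of a single polynomial g with ∂_i g = f_{(i)} for all i.) -/

import Mathlib

open MvPolynomial Finset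

namespace PoincarePoly

variable {p : ℕ}

def pos {n : ℕ} (j : Fin p) (K : Fin n → Fin p) : Fin (n+1) :=
  ⟨(Finset.univ.filter (fun b => K b < j)).card,
    Nat.lt_succ_of_le (le_trans (Finset.card_filter_le _ _) (by simp))⟩

def ins {n : ℕ} (j : Fin p) (K : Fin n → Fin p) : Fin (n+1) → Fin p :=
  Fin.insertNth (pos j K) j K

lemma lt_pos_iff {n : ℕ} {j : Fin p} {K : Fin n → Fin p} (hK : StrictMono K) (b : Fin n) :
    (b : ℕ) < (pos j K : ℕ) ↔ K b < j := by
  constructor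
  · intro h
    by_contra hb
    have hsub : Finset.univ.filter (fun b' => K b' < j) ⊆ Finset.Iio b := by
      intro b' hb'
      simp only [Finset.mem_filter] at hb'
      simp only [Finset.mem_Iio]
      by_contra hge
      exact hb (lt_of_le_of_lt (hK.monotone (le_of_not_gt hge)) hb'.2)
    have := Finset.card_le_card hsub
    rw [Fin.card_Iio] at this
    exact absurd h (not_lt.mpr this)
  · intro h
    have hsub : Finset.Iic b ⊆ Finset.univ.filter (fun b' => K b' < j) := by
      intro b' hb'
      simp only [Finset.mem_Iic] at hb'
      simp only [Finset.mem_filter, Finset.mem_univ, true_and]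
      exact lt_of_le_of_lt (hK.monotone hb') h
    have := Finset.card_le_card hsub
    rw [Fin.card_Iic] at this
    exact lt_of_lt_of_le (Nat.lt_succ_self _) this

end PoincarePoly

namespace PoincarePoly

variable {p : ℕ}

lemma ins_apply_pos {n : ℕ} (j : Fin p) (K : Fin n → Fin p) : ins j K (pos j K) = j :=
  Fin.insertNth_apply_same _ _ _

lemma ins_apply_succAbove {n : ℕ} (j : Fin p) (K : Fin n → Fin p) (b : Fin n) :
    ins j K ((pos j K).succAbove b) = K b :=
  Fin.insertNth_apply_succAbove _ _ _ _

lemma ins_strictMono {n : ℕ} {j : Fin p} {K : Fin n → Fin p} (hK : StrictMono K)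
    (hj : j ∉ Set.range K) : StrictMono (ins j K) := by
  intro x y hxy
  rcases eq_or_ne x (pos j K) with rfl | hx
  · obtain ⟨b, rfl⟩ := Fin.exists_succAbove_eq hxy.ne'
    rw [ins_apply_pos, ins_apply_succAbove]
    have hb : ¬ ((b : ℕ) < (pos j K : ℕ)) := by
      have h2 := (Fin.lt_succAbove_iff_le_castSucc _ _).mp hxy
      rw [Fin.le_def] at h2
      simp only [Fin.coe_castSucc] at h2
      omega
    rw [lt_pos_iff hK] at hb
    rcases lt_or_eq_of_le (le_of_not_gt hb) with h | h
    · exact h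
    · exact absurd ⟨b, h.symm⟩ hj
  · obtain ⟨b, rfl⟩ := Fin.exists_succAbove_eq hx
    rcases eq_or_ne y (pos j K) with rfl | hy
    · rw [ins_apply_pos, ins_apply_succAbove]
      have hb : (b : ℕ) < (pos j K : ℕ) := by
        rw [Fin.succAbove_lt_iff_castSucc_lt] at hxy
        exact hxy
      exact (lt_pos_iff hK b).mp hb
    · obtain ⟨b', rfl⟩ := Fin.exists_succAbove_eq hy
      rw [ins_apply_succAbove, ins_apply_succAbove]
      exact hK ((Fin.strictMono_succAbove _).lt_iff_lt.mp hxy)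

lemma range_ins {n : ℕ} (j : Fin p) (K : Fin n → Fin p) :
    Set.range (ins j K) = insert j (Set.range K) := by
  ext x
  constructor
  · rintro ⟨i, rfl⟩
    rcases eq_or_ne i (pos j K) with rfl | hi
    · rw [ins_apply_pos]; exact Set.mem_insert _ _
    · obtain ⟨b, rfl⟩ := Fin.exists_succAbove_eq hi
      rw [ins_apply_succAbove]; exact Set.mem_insert_of_mem _ ⟨b, rfl⟩
  · rintro (rfl | ⟨b, rfl⟩)
    · exact ⟨pos x K, ins_apply_pos _ _⟩
    · exact ⟨(pos j K).succAbove b, ins_apply_succAbove _ _ _⟩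

lemma range_comp_succAbove {n : ℕ} {α : Type*} {g : Fin (n+1) → α} (hg : Function.Injective g)
    (b : Fin (n+1)) : Set.range (g ∘ b.succAbove) = Set.range g \ {g b} := by
  ext x
  constructor
  · rintro ⟨i, rfl⟩
    exact ⟨⟨_, rfl⟩, fun h => Fin.succAbove_ne b i (hg h)⟩
  · rintro ⟨⟨i, rfl⟩, hx⟩
    have : i ≠ b := fun h => hx (by rw [h]; rfl)
    obtain ⟨b', rfl⟩ := Fin.exists_succAbove_eq this
    exact ⟨b', rfl⟩

end PoincarePoly

namespace PoincarePoly

variable {p : ℕ}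

lemma pos_self {n : ℕ} {I : Fin (n+1) → Fin p} (hI : StrictMono I) (a : Fin (n+1)) :
    pos (I a) (I ∘ a.succAbove) = a := by
  apply Fin.ext
  show (Finset.univ.filter (fun b => I (a.succAbove b) < I a)).card = (a : ℕ)
  have h1 : ∀ b : Fin n, (I (a.succAbove b) < I a) ↔ ((b : ℕ) < (a : ℕ)) := by
    intro b
    rw [hI.lt_iff_lt, Fin.succAbove_lt_iff_castSucc_lt, Fin.lt_def, Fin.coe_castSucc]
  simp only [h1]
  have hle : (a : ℕ) ≤ n := Nat.lt_succ_iff.mp a.isLt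
  have hcard : (Finset.univ.filter (fun b : Fin n => (b : ℕ) < (a : ℕ))).card =
      (Finset.range (a : ℕ)).card := by
    refine Finset.card_bij' (fun b _ => (b : ℕ))
      (fun k hk => (⟨k, lt_of_lt_of_le (Finset.mem_range.mp hk) hle⟩ : Fin n)) ?_ ?_ ?_ ?_
    · intro b hb
      simp only [Finset.mem_filter, Finset.mem_univ, true_and] at hb
      exact Finset.mem_range.mpr hb
    · intro k hk
      simp only [Finset.mem_filter, Finset.mem_univ, true_and]
      exact Finset.mem_range.mp hk
    · intro b hb; rfl
    · intro k hk; rfl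
  rw [hcard, Finset.card_range]

lemma ins_self {n : ℕ} {I : Fin (n+1) → Fin p} (hI : StrictMono I) (a : Fin (n+1)) :
    ins (I a) (I ∘ a.succAbove) = I := by
  unfold ins
  rw [pos_self hI a]
  exact Fin.insertNth_self_removeNth a I

lemma pos_face {n : ℕ} {j : Fin p} {I : Fin (n+1) → Fin p} (hI : StrictMono I) (a : Fin (n+1)) :
    (pos j (I ∘ a.succAbove) : ℕ) =
      if (a : ℕ) < (pos j I : ℕ) then (pos j I : ℕ) - 1 else (pos j I : ℕ) := by
  classical
  have key : (Finset.univ.filter (fun b : Fin n => I (a.succAbove b) < j)).card =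
      ((Finset.univ.filter (fun b' : Fin (n+1) => I b' < j)).erase a).card := by
    apply Finset.card_bij (fun b _ => a.succAbove b)
    · intro b hb
      simp only [Finset.mem_filter, Finset.mem_univ, true_and] at hb
      exact Finset.mem_erase.mpr ⟨Fin.succAbove_ne a b, Finset.mem_filter.mpr ⟨Finset.mem_univ _, hb⟩⟩
    · intro b1 _ b2 _ h
      exact (Fin.strictMono_succAbove a).injective h
    · intro b' hb'
      rw [Finset.mem_erase, Finset.mem_filter] at hb'
      obtain ⟨b, rfl⟩ := Fin.exists_succAbove_eq hb'.1
      exact ⟨b, Finset.mem_filter.mpr ⟨Finset.mem_univ _, hb'.2.2⟩, rfl⟩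
  show (Finset.univ.filter (fun b : Fin n => I (a.succAbove b) < j)).card = _
  rw [key]
  by_cases ha : (a : ℕ) < (pos j I : ℕ)
  · rw [if_pos ha, Finset.card_erase_of_mem]
    · rfl
    · simp only [Finset.mem_filter, Finset.mem_univ, true_and]
      exact (lt_pos_iff hI a).mp ha
  · rw [if_neg ha, Finset.erase_eq_of_notMem]
    · rfl
    · simp only [Finset.mem_filter, Finset.mem_univ, true_and]
      exact fun h => ha ((lt_pos_iff hI a).mpr h)

lemma face_ins {n : ℕ} {j : Fin p} {I : Fin (n+1) → Fin p} (hI : StrictMono I)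
    (hj : j ∉ Set.range I) (a : Fin (n+1)) :
    (ins j I) ∘ Fin.succAbove ((pos j I).succAbove a) = ins j (I ∘ a.succAbove) := by
  have hIa : StrictMono (I ∘ a.succAbove) := hI.comp (Fin.strictMono_succAbove a)
  have hja : j ∉ Set.range (I ∘ a.succAbove) := by
    intro ⟨b, hb⟩
    exact hj ⟨a.succAbove b, hb⟩
  have h1 : StrictMono ((ins j I) ∘ Fin.succAbove ((pos j I).succAbove a)) :=
    (ins_strictMono hI hj).comp (Fin.strictMono_succAbove _)
  have h2 : StrictMono (ins j (I ∘ a.succAbove)) := ins_strictMono hIa hja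
  haveI : WellFoundedLT (Fin (n+1)) := inferInstance
  refine (h1.range_inj h2).mp ?_
  rw [range_comp_succAbove (ins_strictMono hI hj).injective, range_ins, range_ins,
    range_comp_succAbove hI.injective, ins_apply_succAbove]
  have hne : j ≠ I a := fun h => hj (by rw [h]; exact ⟨a, rfl⟩)
  exact (Set.insert_diff_singleton_comm hne _).symm

end PoincarePoly

namespace PoincarePoly

lemma hc_monomial {σ : Type*} [DecidableEq σ] (n : ℕ) (s : σ →₀ ℕ) (c : ℂ) :
    homogeneousComponent n (monomial s c) =
      if Finsupp.degree s = n then monomial s c else 0 := by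
  ext m
  rw [coeff_homogeneousComponent]
  by_cases h2 : s = m
  · subst h2
    by_cases h1 : Finsupp.degree s = n
    · rw [if_pos h1, if_pos h1]
    · rw [if_neg h1, if_neg h1, coeff_zero]
  · have hc : coeff m (monomial s c) = 0 := by rw [coeff_monomial, if_neg h2]
    split_ifs <;> simp [hc]

lemma degree_sub_single {σ : Type*} [DecidableEq σ] (s : σ →₀ ℕ) (i : σ) (hi : s i ≠ 0) :
    Finsupp.degree (s - Finsupp.single i 1) + 1 = Finsupp.degree s := by
  have hs : (s - Finsupp.single i 1) + Finsupp.single i 1 = s := by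
    ext x
    rw [Finsupp.add_apply, Finsupp.tsub_apply, Finsupp.single_apply]
    split_ifs with h
    · subst h; omega
    · omega
  have hone : Finsupp.degree (Finsupp.single i 1) = 1 := by
    exact Finsupp.degree_single i 1
  conv_rhs => rw [← hs]
  rw [Finsupp.degree_eq_weight_one, map_add, ← Finsupp.degree_eq_weight_one, hone]

lemma pderiv_hc {σ : Type*} [DecidableEq σ] (i : σ) (d : ℕ) (q : MvPolynomial σ ℂ) :
    pderiv i (homogeneousComponent (d+1) q) = homogeneousComponent d (pderiv i q) := by
  induction q using MvPolynomial.induction_on' with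
  | add q1 q2 ih1 ih2 => simp only [map_add, ih1, ih2]
  | monomial s c =>
    rw [hc_monomial, pderiv_monomial, hc_monomial]
    by_cases hi : s i = 0
    · have hz : (monomial (s - Finsupp.single i 1) (c * (s i : ℂ))) = 0 := by
        rw [hi]; simp
      split_ifs <;> simp [pderiv_monomial, hz]
    · have hd := degree_sub_single s i hi
      by_cases h : Finsupp.degree s = d + 1
      · rw [if_pos h, if_pos (by omega), pderiv_monomial]
      · rw [if_neg h, if_neg (by omega), map_zero]

lemma pderiv_hc_zero {σ : Type*} [DecidableEq σ] (i : σ) (q : MvPolynomial σ ℂ) :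
    pderiv i (homogeneousComponent 0 q) = 0 := by
  rw [homogeneousComponent_zero, pderiv_C]

lemma euler {p : ℕ} (d : ℕ) (q : MvPolynomial (Fin p) ℂ) :
    ∑ j : Fin p, X j * pderiv j (homogeneousComponent d q) =
      d • homogeneousComponent d q := by
  induction q using MvPolynomial.induction_on' with
  | add q1 q2 ih1 ih2 =>
    rw [map_add]
    simp only [map_add, mul_add, smul_add, ← ih1, ← ih2, Finset.sum_add_distrib]
  | monomial s c =>
    rw [hc_monomial]
    split_ifs with h
    · have key : ∀ j : Fin p, X j * pderiv j (monomial s c) = monomial s (c * (s j : ℂ)) := by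
        intro j
        rw [pderiv_monomial]
        by_cases hj : s j = 0
        · simp [hj]
        · have hsingle : (Finsupp.single j 1 + (s - Finsupp.single j 1)) = s := by
            ext x
            rw [Finsupp.add_apply, Finsupp.tsub_apply, Finsupp.single_apply]
            split_ifs with hx
            · subst hx; omega
            · omega
          rw [X, monomial_mul, hsingle, one_mul]
      simp only [key]
      rw [← map_sum (monomial s), ← Finset.mul_sum]
      have hsum : ∑ j : Fin p, (s j : ℂ) = (d : ℂ) := by
        rw [← Nat.cast_sum]
        congr 1
        rw [← h]
        change _ = ∑ i ∈ s.support, s i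
        rw [Finset.sum_subset (Finset.subset_univ s.support)]
        intro x _ hx
        exact Finsupp.notMem_support_iff.mp hx
      rw [hsum, ← map_nsmul (monomial s) d c, nsmul_eq_mul, mul_comm]
    · simp

variable {p : ℕ}

lemma val_succAbove {n : ℕ} (c : Fin (n+1)) (a : Fin n) :
    ((c.succAbove a : Fin (n+1)) : ℕ) = if (a : ℕ) < (c : ℕ) then (a : ℕ) else (a : ℕ) + 1 := by
  rcases lt_or_ge ((a : ℕ)) ((c : ℕ)) with h | h
  · rw [if_pos h, Fin.succAbove_of_castSucc_lt]
    · rfl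
    · rw [Fin.lt_def]; exact h
  · rw [if_neg (not_lt.mpr h), Fin.succAbove_of_le_castSucc]
    · rfl
    · rw [Fin.le_def]; exact h

lemma neg_one_pow_rel (a c pa sa : ℕ)
    (h : (a < c ∧ pa + 1 = c ∧ sa = a) ∨ (¬ a < c ∧ pa = c ∧ sa = a + 1)) :
    ((-1 : ℂ) ^ a) * (-1) ^ pa = -((-1) ^ c * (-1) ^ sa) := by
  rcases h with ⟨h1, h2, h3⟩ | ⟨h1, h2, h3⟩
  · subst h3; rw [← h2, pow_succ]; ring
  · subst h2; subst h3; rw [pow_succ]; ring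

variable {l₀ : ℕ}

open Classical in
noncomputable def Fc (f : (Fin (l₀ + 1) → Fin p) → MvPolynomial (Fin p) ℂ)
    (j : Fin p) (K : Fin l₀ → Fin p) : MvPolynomial (Fin p) ℂ :=
  if j ∈ Set.range K then 0
  else ((-1 : ℂ) ^ ((pos j K : ℕ))) • f (ins j K)

lemma Fc_of_mem (f : (Fin (l₀ + 1) → Fin p) → MvPolynomial (Fin p) ℂ)
    {j : Fin p} {K : Fin l₀ → Fin p} (h : j ∈ Set.range K) : Fc f j K = 0 := by
  rw [Fc, if_pos h]

lemma Fc_of_not_mem (f : (Fin (l₀ + 1) → Fin p) → MvPolynomial (Fin p) ℂ)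
    {j : Fin p} {K : Fin l₀ → Fin p} (h : j ∉ Set.range K) :
    Fc f j K = ((-1 : ℂ) ^ ((pos j K : ℕ))) • f (ins j K) := by
  rw [Fc, if_neg h]

lemma Fc_self (f : (Fin (l₀ + 1) → Fin p) → MvPolynomial (Fin p) ℂ)
    {I : Fin (l₀ + 1) → Fin p} (hI : StrictMono I) (a : Fin (l₀ + 1)) :
    Fc f (I a) (I ∘ a.succAbove) = ((-1 : ℂ) ^ (a : ℕ)) • f I := by
  have hmem : I a ∉ Set.range (I ∘ a.succAbove) := by
    rintro ⟨b, hb⟩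
    exact Fin.succAbove_ne a b (hI.injective hb)
  rw [Fc_of_not_mem f hmem, pos_self hI, ins_self hI]

lemma lemB (f : (Fin (l₀ + 1) → Fin p) → MvPolynomial (Fin p) ℂ)
    (hclosed : ∀ J : Fin (l₀ + 2) → Fin p, StrictMono J →
      ∑ a : Fin (l₀ + 2), ((-1 : ℂ) ^ (a : ℕ)) •
        MvPolynomial.pderiv (J a) (f (J ∘ a.succAbove)) = 0)
    {I : Fin (l₀ + 1) → Fin p} (hI : StrictMono I) (j : Fin p) :
    ∑ a : Fin (l₀ + 1), ((-1 : ℂ) ^ (a : ℕ)) •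
      MvPolynomial.pderiv (I a) (Fc f j (I ∘ a.succAbove)) =
      MvPolynomial.pderiv j (f I) := by
  by_cases hj : j ∈ Set.range I
  · obtain ⟨b, rfl⟩ := hj
    rw [Finset.sum_eq_single b]
    · rw [Fc_self f hI b, Derivation.map_smul, smul_smul, ← pow_add,
        Even.neg_one_pow ⟨(b : ℕ), rfl⟩, one_smul]
    · intro a _ hab
      have hmem : I b ∈ Set.range (I ∘ a.succAbove) := by
        obtain ⟨b', hb'⟩ := Fin.exists_succAbove_eq (Ne.symm hab)
        exact ⟨b', by rw [Function.comp_apply, hb']⟩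
      rw [Fc_of_mem f hmem, map_zero, smul_zero]
    · intro h; exact absurd (Finset.mem_univ b) h
  · -- j not in range I
    have hJ : StrictMono (ins j I) := ins_strictMono hI hj
    have hc := hclosed (ins j I) hJ
    rw [Fin.sum_univ_succAbove _ (pos j I)] at hc
    have e1 : ins j I (pos j I) = j := ins_apply_pos j I
    have e2 : ins j I ∘ (pos j I).succAbove = I := funext fun b => ins_apply_succAbove j I b
    rw [e1, e2] at hc
    have e3 : ∀ a : Fin (l₀ + 1), ins j I ((pos j I).succAbove a) = I a :=
      fun a => ins_apply_succAbove j I a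
    have hclosed' : ∑ a : Fin (l₀ + 1), ((-1 : ℂ) ^ (((pos j I).succAbove a : ℕ))) •
        MvPolynomial.pderiv (I a) (f (ins j (I ∘ a.succAbove))) =
        -(((-1 : ℂ) ^ ((pos j I : ℕ))) • MvPolynomial.pderiv j (f I)) := by
      rw [neg_eq_of_add_eq_zero_right hc]
      refine Finset.sum_congr rfl fun a _ => ?_
      rw [e3 a, face_ins hI hj a]
    have hterm : ∀ a : Fin (l₀ + 1),
        ((-1 : ℂ) ^ (a : ℕ)) • MvPolynomial.pderiv (I a) (Fc f j (I ∘ a.succAbove)) =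
        (-((-1 : ℂ) ^ ((pos j I : ℕ)))) • (((-1 : ℂ) ^ (((pos j I).succAbove a : ℕ))) •
          MvPolynomial.pderiv (I a) (f (ins j (I ∘ a.succAbove)))) := by
      intro a
      have hja : j ∉ Set.range (I ∘ a.succAbove) := by
        rintro ⟨b, hb⟩
        exact hj ⟨a.succAbove b, hb⟩
      rw [Fc_of_not_mem f hja, Derivation.map_smul, smul_smul, smul_smul]
      congr 1
      rw [neg_mul]
      apply neg_one_pow_rel
      have hpf := pos_face (j := j) hI a
      have hsa := val_succAbove (pos j I) a
      by_cases hlt : (a : ℕ) < ((pos j I : ℕ))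
      · left
        refine ⟨hlt, ?_, ?_⟩
        · rw [hpf, if_pos hlt]
          have : 1 ≤ ((pos j I : ℕ)) := by omega
          omega
        · rw [hsa, if_pos hlt]
      · right
        refine ⟨hlt, ?_, ?_⟩
        · rw [hpf, if_neg hlt]
        · rw [hsa, if_neg hlt]
    calc ∑ a : Fin (l₀ + 1), ((-1 : ℂ) ^ (a : ℕ)) •
          MvPolynomial.pderiv (I a) (Fc f j (I ∘ a.succAbove))
        = ∑ a : Fin (l₀ + 1), (-((-1 : ℂ) ^ ((pos j I : ℕ)))) •
            (((-1 : ℂ) ^ (((pos j I).succAbove a : ℕ))) •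
            MvPolynomial.pderiv (I a) (f (ins j (I ∘ a.succAbove)))) :=
          Finset.sum_congr rfl fun a _ => hterm a
      _ = (-((-1 : ℂ) ^ ((pos j I : ℕ)))) • ∑ a : Fin (l₀ + 1),
            (((-1 : ℂ) ^ (((pos j I).succAbove a : ℕ))) •
            MvPolynomial.pderiv (I a) (f (ins j (I ∘ a.succAbove)))) := by
          rw [Finset.smul_sum]
      _ = MvPolynomial.pderiv j (f I) := by
          rw [hclosed', smul_neg, neg_smul, neg_neg, smul_smul, ← pow_add,
            Even.neg_one_pow ⟨((pos j I : ℕ)), rfl⟩, one_smul]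



end PoincarePoly

open PoincarePoly in
theorem stmt_0 (p m l₀ : ℕ) (hp : 1 ≤ p)
    (f : (Fin (l₀ + 1) → Fin p) → MvPolynomial (Fin p) ℂ)
    (hdeg : ∀ I : Fin (l₀ + 1) → Fin p, StrictMono I → (f I).totalDegree ≤ m)
    (hclosed : ∀ J : Fin (l₀ + 2) → Fin p, StrictMono J →
      ∑ a : Fin (l₀ + 2), ((-1 : ℂ) ^ (a : ℕ)) •
        MvPolynomial.pderiv (J a) (f (J ∘ a.succAbove)) = 0) :
    ∃ g : (Fin l₀ → Fin p) → MvPolynomial (Fin p) ℂ,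
      (∀ K : Fin l₀ → Fin p, StrictMono K → (g K).totalDegree ≤ m + 1) ∧
      ∀ I : Fin (l₀ + 1) → Fin p, StrictMono I →
        f I = ∑ a : Fin (l₀ + 1), ((-1 : ℂ) ^ (a : ℕ)) •
          MvPolynomial.pderiv (I a) (g (I ∘ a.succAbove)) := by
  classical
  refine ⟨fun K => ∑ d ∈ Finset.range (m+1), (((d + l₀ + 1 : ℕ) : ℂ))⁻¹ •
      ∑ j : Fin p, X j * homogeneousComponent d (Fc f j K), ?_, ?_⟩
  · intro K _
    refine (totalDegree_finset_sum _ _).trans (Finset.sup_le fun d hd => ?_)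
    refine (totalDegree_smul_le _ _).trans ?_
    refine (totalDegree_finset_sum _ _).trans (Finset.sup_le fun j _ => ?_)
    refine (totalDegree_mul _ _).trans ?_
    have h1 : (X j : MvPolynomial (Fin p) ℂ).totalDegree ≤ 1 := le_of_eq (totalDegree_X _)
    have h2 : (homogeneousComponent d (Fc f j K)).totalDegree ≤ d :=
      (homogeneousComponent_isHomogeneous (n := d) (φ := Fc f j K)).totalDegree_le
    have h3 : d ≤ m := Nat.lt_succ_iff.mp (Finset.mem_range.mp hd)
    omega
  · intro I hI
    symm
    have inner : ∀ (a : Fin (l₀+1)) (d : ℕ),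
        MvPolynomial.pderiv (I a)
          (∑ j : Fin p, X j * homogeneousComponent d (Fc f j (I ∘ a.succAbove)))
        = homogeneousComponent d (Fc f (I a) (I ∘ a.succAbove))
          + ∑ j : Fin p, X j *
            MvPolynomial.pderiv (I a) (homogeneousComponent d (Fc f j (I ∘ a.succAbove))) := by
      intro a d
      rw [map_sum]
      rw [Finset.sum_congr rfl fun j _ => pderiv_mul (i := I a)
        (f := X j) (g := homogeneousComponent d (Fc f j (I ∘ a.succAbove)))]
      rw [Finset.sum_add_distrib]
      congr 1
      rw [Finset.sum_eq_single (I a)]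
      · rw [pderiv_X_self, one_mul]
      · intro j _ hja
        rw [pderiv_X_of_ne hja, zero_mul]
      · intro h; exact absurd (Finset.mem_univ _) h
    have key : ∀ d : ℕ, ∑ a : Fin (l₀+1), ((-1 : ℂ) ^ (a : ℕ)) •
        MvPolynomial.pderiv (I a)
          (∑ j : Fin p, X j * homogeneousComponent d (Fc f j (I ∘ a.succAbove)))
        = (d + l₀ + 1) • homogeneousComponent d (f I) := by
      intro d
      simp only [inner, smul_add, Finset.sum_add_distrib]
      have partA : ∑ a : Fin (l₀+1), ((-1 : ℂ) ^ (a : ℕ)) •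
          homogeneousComponent d (Fc f (I a) (I ∘ a.succAbove))
          = (l₀ + 1) • homogeneousComponent d (f I) := by
        have : ∀ a : Fin (l₀+1), ((-1 : ℂ) ^ (a : ℕ)) •
            homogeneousComponent d (Fc f (I a) (I ∘ a.succAbove))
            = homogeneousComponent d (f I) := by
          intro a
          rw [Fc_self f hI a, map_smul, smul_smul, ← pow_add,
            Even.neg_one_pow ⟨(a : ℕ), rfl⟩, one_smul]
        rw [Finset.sum_congr rfl fun a _ => this a, Finset.sum_const, Finset.card_univ,
          Fintype.card_fin]
      rw [partA]
      rcases d with _ | d'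
      · have : ∀ a : Fin (l₀+1), ((-1 : ℂ) ^ (a : ℕ)) •
            ∑ j : Fin p, X j * MvPolynomial.pderiv (I a)
              (homogeneousComponent 0 (Fc f j (I ∘ a.succAbove))) = 0 := by
          intro a
          simp only [pderiv_hc_zero, mul_zero, Finset.sum_const_zero, smul_zero]
        rw [Finset.sum_congr rfl fun a _ => this a, Finset.sum_const_zero, add_zero]
        norm_num
      · have partB : ∑ a : Fin (l₀+1), ((-1 : ℂ) ^ (a : ℕ)) •
            ∑ j : Fin p, X j * MvPolynomial.pderiv (I a)
              (homogeneousComponent (d'+1) (Fc f j (I ∘ a.succAbove)))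
            = (d' + 1) • homogeneousComponent (d'+1) (f I) := by
          have swap : ∑ a : Fin (l₀+1), ((-1 : ℂ) ^ (a : ℕ)) •
              ∑ j : Fin p, X j * MvPolynomial.pderiv (I a)
                (homogeneousComponent (d'+1) (Fc f j (I ∘ a.succAbove)))
              = ∑ j : Fin p, X j * homogeneousComponent d'
                  (∑ a : Fin (l₀+1), ((-1 : ℂ) ^ (a : ℕ)) •
                    MvPolynomial.pderiv (I a) (Fc f j (I ∘ a.succAbove))) := by
            simp only [Finset.smul_sum, pderiv_hc]
            rw [Finset.sum_comm]
            refine Finset.sum_congr rfl fun j _ => ?_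
            rw [map_sum, Finset.mul_sum]
            refine Finset.sum_congr rfl fun a _ => ?_
            rw [map_smul, mul_smul_comm]
          rw [swap]
          have : ∀ j : Fin p, X j * homogeneousComponent d'
              (∑ a : Fin (l₀+1), ((-1 : ℂ) ^ (a : ℕ)) •
                MvPolynomial.pderiv (I a) (Fc f j (I ∘ a.succAbove)))
              = X j * MvPolynomial.pderiv j (homogeneousComponent (d'+1) (f I)) := by
            intro j
            rw [lemB f hclosed hI j, pderiv_hc]
          rw [Finset.sum_congr rfl fun j _ => this j, euler]
        rw [partB, ← add_nsmul]
        congr 1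
        omega
    calc ∑ a : Fin (l₀ + 1), ((-1 : ℂ) ^ (a : ℕ)) •
          MvPolynomial.pderiv (I a) (∑ d ∈ Finset.range (m+1), (((d + l₀ + 1 : ℕ) : ℂ))⁻¹ •
            ∑ j : Fin p, X j * homogeneousComponent d (Fc f j (I ∘ a.succAbove)))
        = ∑ d ∈ Finset.range (m+1), (((d + l₀ + 1 : ℕ) : ℂ))⁻¹ •
            ∑ a : Fin (l₀ + 1), ((-1 : ℂ) ^ (a : ℕ)) •
              MvPolynomial.pderiv (I a)
                (∑ j : Fin p, X j * homogeneousComponent d (Fc f j (I ∘ a.succAbove))) := by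
          have pointwise : ∀ a : Fin (l₀+1), ((-1:ℂ)^(a:ℕ)) •
              MvPolynomial.pderiv (I a) (∑ d ∈ Finset.range (m+1), (((d + l₀ + 1 : ℕ) : ℂ))⁻¹ •
                ∑ j : Fin p, X j * homogeneousComponent d (Fc f j (I ∘ a.succAbove)))
              = ∑ d ∈ Finset.range (m+1), (((d + l₀ + 1 : ℕ) : ℂ))⁻¹ •
                (((-1:ℂ)^(a:ℕ)) • MvPolynomial.pderiv (I a)
                  (∑ j : Fin p, X j * homogeneousComponent d (Fc f j (I ∘ a.succAbove)))) := by
            intro a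
            rw [map_sum, Finset.smul_sum]
            refine Finset.sum_congr rfl fun d _ => ?_
            rw [Derivation.map_smul, smul_comm]
          rw [Finset.sum_congr rfl fun a _ => pointwise a, Finset.sum_comm]
          refine Finset.sum_congr rfl fun d _ => ?_
          rw [Finset.smul_sum]
      _ = ∑ d ∈ Finset.range (m+1), homogeneousComponent d (f I) := by
          refine Finset.sum_congr rfl fun d _ => ?_
          have hne : (((d + l₀ + 1 : ℕ) : ℂ)) ≠ 0 := Nat.cast_ne_zero.mpr (by omega)
          rw [key d, ← Nat.cast_smul_eq_nsmul ℂ, smul_smul, inv_mul_cancel₀ hne, one_smul]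
      _ = f I := by
          have ht : (f I).totalDegree ≤ m := hdeg I hI
          refine (Finset.sum_subset (Finset.range_subset_range.mpr (by omega))
            (fun d _ hd => ?_)).symm.trans (sum_homogeneousComponent (f I))
          apply homogeneousComponent_eq_zero
          simp only [Finset.mem_range, not_lt] at hd
          omega
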